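/- arXiv:1408.3021 — 5 statements merged into one kernel-verified Lean document; each statement's English description precedes it below -/
import Mathlib

section
/- Let f : ℝ → ℝ be continuous with f(t)/t³ ≤ f(s)/s³ whenever 0 < t < s or s < t < 0, and set F(s) = ∫₀^s f(t) dt. Then H(s) := s f(s) − 4F(s) ≥ 0 for every s ∈ ℝ. -/
open MeasureTheory intervalIntegral

/-- If `f : ℝ → ℝ` is continuous and `f(s)/s³` is increasing in `|s|`
(i.e. `f(t)/t³ ≤ f(s)/s³` whenever `0 < t < s` or `s < t < 0`), then
`H(s) = s f(s) - 4 F(s) ≥ 0` for all `s`, where `F(s) = ∫₀ˢ f`. -/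
theorem sign_changing_SP_H_nonneg
    (f : ℝ → ℝ) (hf : Continuous f)
    (hf4 : ∀ t s : ℝ, (0 < t ∧ t < s) ∨ (s < t ∧ t < 0) → f t / t ^ 3 ≤ f s / s ^ 3) :
    ∀ s : ℝ, 0 ≤ s * f s - 4 * ∫ t in (0:ℝ)..s, f t := by
  intro s
  rcases lt_trichotomy s 0 with hs | rfl | hs
  · -- s < 0
    set c := f s / s ^ 3 with hc
    have hsne : s ≠ 0 := ne_of_lt hs
    have hcs : c * s ^ 4 = s * f s := by
      rw [hc, show s ^ 4 = s ^ 3 * s by ring, ← mul_assoc, div_mul_cancel₀ _ (pow_ne_zero 3 hsne)]; ring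
    have hpt : ∀ t ∈ Set.Ioo s 0, c * t ^ 3 ≤ f t := by
      intro t ht
      have h := hf4 t s (Or.inr ⟨ht.1, ht.2⟩)
      have ht3 : t ^ 3 < 0 := Odd.pow_neg (by decide) ht.2
      have := mul_le_mul_of_nonpos_right h (le_of_lt ht3)
      rwa [div_mul_cancel₀ _ (ne_of_lt ht3)] at this
    have hmono : ∫ t in Set.Ioo s 0, (c * t ^ 3) ≤ ∫ t in Set.Ioo s 0, f t :=
      setIntegral_mono_on ((continuous_const.mul (continuous_pow 3)).integrableOn_Icc.mono_set Set.Ioo_subset_Icc_self)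
        (hf.integrableOn_Icc.mono_set Set.Ioo_subset_Icc_self) measurableSet_Ioo hpt
    have h1 : ∫ t in (0:ℝ)..s, f t = -∫ t in Set.Ioo s 0, f t := by
      rw [intervalIntegral.integral_symm, intervalIntegral.integral_of_le hs.le,
        MeasureTheory.integral_Ioc_eq_integral_Ioo]
    have h2 : ∫ t in Set.Ioo s 0, (c * t ^ 3) = -(c * s ^ 4) / 4 := by
      rw [← MeasureTheory.integral_Ioc_eq_integral_Ioo,
        ← intervalIntegral.integral_of_le hs.le]
      simp [intervalIntegral.integral_const_mul]
      ring
    rw [h1]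
    rw [h2] at hmono
    linarith
  · simp
  · -- 0 < s
    set c := f s / s ^ 3 with hc
    have hsne : s ≠ 0 := ne_of_gt hs
    have hcs : c * s ^ 4 = s * f s := by
      rw [hc, show s ^ 4 = s ^ 3 * s by ring, ← mul_assoc, div_mul_cancel₀ _ (pow_ne_zero 3 hsne)]; ring
    have hpt : ∀ t ∈ Set.Ioo 0 s, f t ≤ c * t ^ 3 := by
      intro t ht
      have h := hf4 t s (Or.inl ⟨ht.1, ht.2⟩)
      have h1 : (0:ℝ) < t := ht.1
      have ht3 : 0 < t ^ 3 := by positivity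
      have := mul_le_mul_of_nonneg_right h (le_of_lt ht3)
      rwa [div_mul_cancel₀ _ (ne_of_gt ht3)] at this
    have hmono : ∫ t in Set.Ioo 0 s, f t ≤ ∫ t in Set.Ioo 0 s, (c * t ^ 3) :=
      setIntegral_mono_on (hf.integrableOn_Icc.mono_set Set.Ioo_subset_Icc_self)
        ((continuous_const.mul (continuous_pow 3)).integrableOn_Icc.mono_set Set.Ioo_subset_Icc_self)
        measurableSet_Ioo hpt
    have h1 : ∫ t in (0:ℝ)..s, f t = ∫ t in Set.Ioo 0 s, f t := by
      rw [intervalIntegral.integral_of_le hs.le, MeasureTheory.integral_Ioc_eq_integral_Ioo]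
    have h2 : ∫ t in Set.Ioo 0 s, (c * t ^ 3) = c * s ^ 4 / 4 := by
      rw [← MeasureTheory.integral_Ioc_eq_integral_Ioo,
        ← intervalIntegral.integral_of_le hs.le]
      simp [intervalIntegral.integral_const_mul]
      ring
    rw [h1]
    rw [h2] at hmono
    linarith
end

section
/- Let f : ℝ → ℝ be continuous with f(t)/t³ ≤ f(s)/s³ whenever 0 < t < s or s < t < 0, and set F(s) = ∫₀^s f(t) dt and H(s) = s f(s) − 4F(s). Then H is non-decreasing in |s| on each half-line: H(t) ≤ H(s) whenever 0 ≤ t ≤ s, and H(t) ≤ H(s) whenever s ≤ t ≤ 0. -/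
open MeasureTheory intervalIntegral

/-- If `f : ℝ → ℝ` is continuous and `f(s)/s³` is increasing in `|s|`,
then `H(s) = s f(s) - 4 F(s)` (with `F(s) = ∫₀ˢ f`) is non-decreasing in `|s|` on each
half-line: `H(t) ≤ H(s)` whenever `0 ≤ t ≤ s`, and `H(t) ≤ H(s)` whenever `s ≤ t ≤ 0`. -/
theorem sign_changing_SP_H_monotone
    (f : ℝ → ℝ) (hf : Continuous f)
    (hf4 : ∀ t s : ℝ, (0 < t ∧ t < s) ∨ (s < t ∧ t < 0) → f t / t ^ 3 ≤ f s / s ^ 3)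
    (H : ℝ → ℝ) (hH : ∀ s : ℝ, H s = s * f s - 4 * ∫ t in (0:ℝ)..s, f t) :
    (∀ t s : ℝ, 0 ≤ t → t ≤ s → H t ≤ H s) ∧
    (∀ t s : ℝ, s ≤ t → t ≤ 0 → H t ≤ H s) := by
  have h0 : ∀ᵐ u : ℝ, u ≠ 0 := by
    rw [Filter.eventually_iff, MeasureTheory.mem_ae_iff]
    simp [Set.compl_setOf]
  constructor
  · intro t s ht hts
    rcases eq_or_lt_of_le hts with rfl | hts'
    · exact le_refl _
    have hs : 0 < s := lt_of_le_of_lt ht hts'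
    set c : ℝ := f s / s ^ 3 with hc
    have hint : IntervalIntegrable f volume t s := hf.intervalIntegrable t s
    have hint2 : IntervalIntegrable (fun u => c * u ^ 3) volume t s :=
      (continuous_const.mul (continuous_pow 3)).intervalIntegrable t s
    have key : (∫ u in t..s, f u) ≤ ∫ u in t..s, c * u ^ 3 := by
      apply intervalIntegral.integral_mono_ae_restrict hts hint hint2
      filter_upwards [MeasureTheory.ae_restrict_of_ae h0,
        MeasureTheory.ae_restrict_mem measurableSet_Icc] with u hu0 huI
      obtain ⟨htu, hus⟩ := huI
      have hu : 0 < u := lt_of_le_of_ne (le_trans ht htu) (Ne.symm hu0)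
      rcases eq_or_lt_of_le hus with rfl | hus'
      · have : c * u ^ 3 = f u := by rw [hc]; field_simp
        rw [this]
      · have h4 := hf4 u s (Or.inl ⟨hu, hus'⟩)
        have : f u = (f u / u ^ 3) * u ^ 3 := by field_simp
        rw [this]
        exact mul_le_mul_of_nonneg_right h4 (by positivity)
    have hcalc : (∫ u in t..s, c * u ^ 3) = c * (s ^ 4 / 4 - t ^ 4 / 4) := by
      rw [intervalIntegral.integral_const_mul, integral_pow]
      push_cast
      ring
    have hratio : t * f t ≤ t ^ 4 * c := by
      rcases eq_or_lt_of_le ht with rfl | ht'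
      · simp
      · have h4 := hf4 t s (Or.inl ⟨ht', hts'⟩)
        have h1 : t * f t = t ^ 4 * (f t / t ^ 3) := by field_simp
        rw [h1]
        exact mul_le_mul_of_nonneg_left h4 (by positivity)
    have hcs : c * s ^ 4 = s * f s := by
      have hs0 : s ≠ 0 := hs.ne'
      rw [hc]; field_simp
    have hsplit : (∫ u in (0:ℝ)..t, f u) + (∫ u in t..s, f u) = ∫ u in (0:ℝ)..s, f u :=
      intervalIntegral.integral_add_adjacent_intervals (hf.intervalIntegrable 0 t) hint
    rw [hH, hH]
    nlinarith [key, hcalc, hratio, hcs, hsplit]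
  · intro t s hst ht
    rcases eq_or_lt_of_le hst with rfl | hst'
    · exact le_refl _
    have hs : s < 0 := lt_of_lt_of_le hst' ht
    have hs0 : s ≠ 0 := hs.ne
    set c : ℝ := f s / s ^ 3 with hc
    have hint : IntervalIntegrable f volume s t := hf.intervalIntegrable s t
    have hint2 : IntervalIntegrable (fun u => c * u ^ 3) volume s t :=
      (continuous_const.mul (continuous_pow 3)).intervalIntegrable s t
    have key : (∫ u in s..t, c * u ^ 3) ≤ ∫ u in s..t, f u := by
      apply intervalIntegral.integral_mono_ae_restrict hst hint2 hint
      filter_upwards [MeasureTheory.ae_restrict_of_ae h0,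
        MeasureTheory.ae_restrict_mem measurableSet_Icc] with u hu0 huI
      obtain ⟨hsu, hut⟩ := huI
      have hu : u < 0 := lt_of_le_of_ne (le_trans hut ht) hu0
      rcases eq_or_lt_of_le hsu with heq | hsu'
      · subst heq
        have h : c * s ^ 3 = f s := by rw [hc]; field_simp
        exact le_of_eq h
      · have h4 := hf4 u s (Or.inr ⟨hsu', hu⟩)
        have hu3 : u ^ 3 < 0 := Odd.pow_neg ⟨1, by norm_num⟩ hu
        have : f u = (f u / u ^ 3) * u ^ 3 := by field_simp
        rw [this]
        exact mul_le_mul_of_nonpos_right h4 hu3.le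
    have hcalc : (∫ u in s..t, c * u ^ 3) = c * (t ^ 4 / 4 - s ^ 4 / 4) := by
      rw [intervalIntegral.integral_const_mul, integral_pow]
      push_cast
      ring
    have hratio : t * f t ≤ t ^ 4 * c := by
      rcases eq_or_lt_of_le ht with rfl | ht'
      · simp
      · have h4 := hf4 t s (Or.inr ⟨hst', ht'⟩)
        have ht0 : t ≠ 0 := ht'.ne
        have h1 : t * f t = t ^ 4 * (f t / t ^ 3) := by field_simp
        rw [h1]
        exact mul_le_mul_of_nonneg_left h4 (by positivity)
    have hcs : c * s ^ 4 = s * f s := by rw [hc]; field_simp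
    have hsplit : (∫ u in (0:ℝ)..s, f u) + (∫ u in s..t, f u) = ∫ u in (0:ℝ)..t, f u :=
      intervalIntegral.integral_add_adjacent_intervals (hf.intervalIntegrable 0 s) hint
    rw [hH, hH]
    nlinarith [key, hcalc, hratio, hcs, hsplit]
end

section
/- (Miranda's theorem in dimension 2.) Let a₁ < b₁ and a₂ < b₂ and let Ψ = (Ψ₁, Ψ₂) : [a₁,b₁] × [a₂,b₂] → ℝ² be continuous. Suppose Ψ₁(a₁, τ) > 0 and Ψ₁(b₁, τ) < 0 for all τ ∈ [a₂,b₂], and Ψ₂(ξ, a₂) > 0 and Ψ₂(ξ, b₂) < 0 for all ξ ∈ [a₁,b₁]. Then there exists (ξ₀, τ₀) ∈ [a₁,b₁] × [a₂,b₂] with Ψ(ξ₀, τ₀) = (0, 0). -/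
open Set Finset Filter Topology

namespace MirandaAux

/-- door indicator: edge whose endpoints are labeled 1 and 2. -/
def Dlab : Fin 3 → Fin 3 → ZMod 2 := fun a b =>
  if (a = 1 ∧ b = 2) ∨ (a = 2 ∧ b = 1) then 1 else 0

lemma tele (f : ℕ → ZMod 2) (n : ℕ) :
    ∑ j ∈ Finset.range n, (f j + f (j + 1)) = f 0 + f n := by
  induction n with
  | zero => simp [CharTwo.add_self_eq_zero]
  | succ n ih =>
      rw [Finset.sum_range_succ, ih, add_assoc, ← add_assoc (f n),
        CharTwo.add_self_eq_zero, zero_add]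

lemma tri (a b c : Fin 3) (h : Dlab a b + Dlab b c + Dlab a c = 1) :
    (a = 0 ∨ b = 0 ∨ c = 0) ∧ (a = 1 ∨ b = 1 ∨ c = 1) ∧ (a = 2 ∨ b = 2 ∨ c = 2) := by
  revert a b c; decide

lemma Dlab_ne2 {a b : Fin 3} (ha : a ≠ 2) (hb : b ≠ 2) : Dlab a b = 0 := by
  revert a b; decide

lemma Dlab_ne1 {a b : Fin 3} (ha : a ≠ 1) (hb : b ≠ 1) : Dlab a b = 0 := by
  revert a b; decide

lemma Dlab_bot {a b : Fin 3} (ha : a ≠ 0) (hb : b ≠ 0) :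
    Dlab a b = (if a = 1 then (0 : ZMod 2) else 1) + (if b = 1 then (0 : ZMod 2) else 1) := by
  revert a b; decide

lemma z2cases (x : ZMod 2) (hx : x ≠ 0) : x = 1 := by revert x; decide

lemma zsplit (a b c d e : ZMod 2) :
    a + b + d + (c + e + d) = (a + e) + (c + b) := by revert a b c d e; decide

/-- Discrete 2‑dimensional Miranda theorem. -/
lemma discrete_miranda (n : ℕ) (L : ℕ → ℕ → Fin 3)
    (hleft : ∀ j, L 0 j = 1)
    (hright : ∀ j, L n j ≠ 1)
    (htop : ∀ i, L i n ≠ 2)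
    (hbot : ∀ i, L i 0 ≠ 0) :
    ∃ i j, i < n ∧ j < n ∧ ∃ v₀ v₁ v₂ : ℕ × ℕ,
      (v₀.1 = i ∨ v₀.1 = i + 1) ∧ (v₀.2 = j ∨ v₀.2 = j + 1) ∧
      (v₁.1 = i ∨ v₁.1 = i + 1) ∧ (v₁.2 = j ∨ v₁.2 = j + 1) ∧
      (v₂.1 = i ∨ v₂.1 = i + 1) ∧ (v₂.2 = j ∨ v₂.2 = j + 1) ∧
      L v₀.1 v₀.2 = 0 ∧ L v₁.1 v₁.2 = 1 ∧ L v₂.1 v₂.2 = 2 := by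
  set H : ℕ → ℕ → ZMod 2 := fun i j => Dlab (L i j) (L (i+1) j) with hH
  set V : ℕ → ℕ → ZMod 2 := fun i j => Dlab (L i j) (L i (j+1)) with hV
  set Dg : ℕ → ℕ → ZMod 2 := fun i j => Dlab (L i j) (L (i+1) (j+1)) with hDg
  -- the total door count
  have hS : ∑ i ∈ range n, ∑ j ∈ range n,
      ((H i j + Dlab (L (i+1) j) (L (i+1) (j+1)) + Dg i j)
        + (V i j + Dlab (L i (j+1)) (L (i+1) (j+1)) + Dg i j)) = 1 := by
    have hrw : ∀ i ∈ range n, ∀ j ∈ range n,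
        (H i j + Dlab (L (i+1) j) (L (i+1) (j+1)) + Dg i j)
          + (V i j + Dlab (L i (j+1)) (L (i+1) (j+1)) + Dg i j)
        = (H i j + H i (j+1)) + (V i j + V (i+1) j) := by
      intro i _ j _
      simp only [hH, hV, hDg]
      exact zsplit _ _ _ _ _
    calc ∑ i ∈ range n, ∑ j ∈ range n,
          ((H i j + Dlab (L (i+1) j) (L (i+1) (j+1)) + Dg i j)
            + (V i j + Dlab (L i (j+1)) (L (i+1) (j+1)) + Dg i j))
        = ∑ i ∈ range n, ∑ j ∈ range n,
            ((H i j + H i (j+1)) + (V i j + V (i+1) j)) := by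
            refine Finset.sum_congr rfl fun i hi => Finset.sum_congr rfl fun j hj => ?_
            exact hrw i hi j hj
      _ = (∑ i ∈ range n, ∑ j ∈ range n, (H i j + H i (j+1)))
            + ∑ i ∈ range n, ∑ j ∈ range n, (V i j + V (i+1) j) := by
            rw [← Finset.sum_add_distrib]
            exact Finset.sum_congr rfl fun i _ => Finset.sum_add_distrib
      _ = (∑ i ∈ range n, (H i 0 + H i n))
            + ∑ j ∈ range n, (V 0 j + V n j) := by
            congr 1
            · exact Finset.sum_congr rfl fun i _ => tele (fun j => H i j) n
            · rw [Finset.sum_comm]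
              exact Finset.sum_congr rfl fun j _ => tele (fun i => V i j) n
      _ = 1 := by
            have h1 : ∀ i, H i n = 0 := fun i => Dlab_ne2 (htop i) (htop (i+1))
            have h2 : ∀ j, V 0 j = 0 := by
              intro j; simp only [hV, hleft]; decide
            have h3 : ∀ j, V n j = 0 := fun j => Dlab_ne1 (hright j) (hright (j+1))
            have h4 : ∀ i, H i 0 = (if L i 0 = 1 then (0:ZMod 2) else 1)
                + (if L (i+1) 0 = 1 then (0:ZMod 2) else 1) :=
              fun i => Dlab_bot (hbot i) (hbot (i+1))
            simp only [h1, h2, h3, add_zero, zero_add, Finset.sum_const_zero]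
            rw [Finset.sum_congr rfl (fun i _ => h4 i),
              tele (fun i => if L i 0 = 1 then (0:ZMod 2) else 1) n]
            have hL00 : L 0 0 = 1 := hleft 0
            have hLn0 : L n 0 ≠ 1 := hright 0
            simp [hL00, hLn0]
  -- extract a nonzero cell
  have hne : ∑ i ∈ range n, ∑ j ∈ range n,
      ((H i j + Dlab (L (i+1) j) (L (i+1) (j+1)) + Dg i j)
        + (V i j + Dlab (L i (j+1)) (L (i+1) (j+1)) + Dg i j)) ≠ 0 := by
    rw [hS]; decide
  obtain ⟨i, hi, hi'⟩ := Finset.exists_ne_zero_of_sum_ne_zero hne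
  obtain ⟨j, hj, hj'⟩ := Finset.exists_ne_zero_of_sum_ne_zero hi'
  rw [Finset.mem_range] at hi hj
  refine ⟨i, j, hi, hj, ?_⟩
  have hor : (H i j + Dlab (L (i+1) j) (L (i+1) (j+1)) + Dg i j) = 1
      ∨ (V i j + Dlab (L i (j+1)) (L (i+1) (j+1)) + Dg i j) = 1 := by
    by_contra hc
    push_neg at hc
    obtain ⟨hc1, hc2⟩ := hc
    apply hj'
    have e1 : (H i j + Dlab (L (i+1) j) (L (i+1) (j+1)) + Dg i j) = 0 := by
      by_contra h; exact hc1 (z2cases _ h)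
    have e2 : (V i j + Dlab (L i (j+1)) (L (i+1) (j+1)) + Dg i j) = 0 := by
      by_contra h; exact hc2 (z2cases _ h)
    rw [e1, e2, add_zero]
  rcases hor with h | h
  · -- lower triangle (i,j), (i+1,j), (i+1,j+1)
    have := tri (L i j) (L (i+1) j) (L (i+1) (j+1)) h
    obtain ⟨h0, h1, h2⟩ := this
    have get : ∀ t : Fin 3, (L i j = t ∨ L (i+1) j = t ∨ L (i+1) (j+1) = t) →
        ∃ v : ℕ × ℕ, (v.1 = i ∨ v.1 = i + 1) ∧ (v.2 = j ∨ v.2 = j + 1) ∧ L v.1 v.2 = t := by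
      rintro t (h | h | h)
      exacts [⟨(i, j), Or.inl rfl, Or.inl rfl, h⟩,
        ⟨(i+1, j), Or.inr rfl, Or.inl rfl, h⟩,
        ⟨(i+1, j+1), Or.inr rfl, Or.inr rfl, h⟩]
    obtain ⟨v₀, a0, b0, c0⟩ := get 0 h0
    obtain ⟨v₁, a1, b1, c1⟩ := get 1 h1
    obtain ⟨v₂, a2, b2, c2⟩ := get 2 h2
    exact ⟨v₀, v₁, v₂, a0, b0, a1, b1, a2, b2, c0, c1, c2⟩
  · -- upper triangle (i,j), (i,j+1), (i+1,j+1)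
    have := tri (L i j) (L i (j+1)) (L (i+1) (j+1)) h
    obtain ⟨h0, h1, h2⟩ := this
    have get : ∀ t : Fin 3, (L i j = t ∨ L i (j+1) = t ∨ L (i+1) (j+1) = t) →
        ∃ v : ℕ × ℕ, (v.1 = i ∨ v.1 = i + 1) ∧ (v.2 = j ∨ v.2 = j + 1) ∧ L v.1 v.2 = t := by
      rintro t (h | h | h)
      exacts [⟨(i, j), Or.inl rfl, Or.inl rfl, h⟩,
        ⟨(i, j+1), Or.inl rfl, Or.inr rfl, h⟩,
        ⟨(i+1, j+1), Or.inr rfl, Or.inr rfl, h⟩]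
    obtain ⟨v₀, a0, b0, c0⟩ := get 0 h0
    obtain ⟨v₁, a1, b1, c1⟩ := get 1 h1
    obtain ⟨v₂, a2, b2, c2⟩ := get 2 h2
    exact ⟨v₀, v₁, v₂, a0, b0, a1, b1, a2, b2, c0, c1, c2⟩


noncomputable def gridX (a b : ℝ) (N i : ℕ) : ℝ := a + (min i N : ℕ) * ((b - a) / N)

lemma gridX_zero (a b : ℝ) (N : ℕ) : gridX a b N 0 = a := by simp [gridX]

lemma gridX_last (a b : ℝ) {N : ℕ} (hN : 0 < N) : gridX a b N N = b := by
  have hNne : (N : ℝ) ≠ 0 := Nat.cast_ne_zero.2 hN.ne'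
  unfold gridX
  rw [min_self]
  field_simp
  ring

lemma gridX_mem {a b : ℝ} (hab : a ≤ b) {N : ℕ} (hN : 0 < N) (i : ℕ) :
    gridX a b N i ∈ Set.Icc a b := by
  have hδ : 0 ≤ (b - a) / N := div_nonneg (by linarith) (Nat.cast_nonneg N)
  have h1 : ((min i N : ℕ) : ℝ) ≤ (N : ℝ) := by exact_mod_cast min_le_right i N
  have hNne : (N : ℝ) ≠ 0 := Nat.cast_ne_zero.2 hN.ne'
  have h2 : (N : ℝ) * ((b - a) / N) = b - a := by field_simp
  have h3 := mul_le_mul_of_nonneg_right h1 hδ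
  have h4 : 0 ≤ ((min i N : ℕ) : ℝ) * ((b - a) / N) :=
    mul_nonneg (Nat.cast_nonneg _) hδ
  unfold gridX
  constructor <;> [linarith; linarith]

lemma gridX_step {a b : ℝ} (hab : a ≤ b) {N : ℕ} (hN : 0 < N) {i u v : ℕ}
    (hu : u = i ∨ u = i + 1) (hv : v = i ∨ v = i + 1) :
    dist (gridX a b N u) (gridX a b N v) ≤ (b - a) / N := by
  have hδ : 0 ≤ (b - a) / N := div_nonneg (by linarith) (Nat.cast_nonneg N)
  have mono : gridX a b N i ≤ gridX a b N (i + 1) ∧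
      gridX a b N (i + 1) ≤ gridX a b N i + (b - a) / N := by
    have e1 : min i N ≤ min (i + 1) N := by omega
    have e2 : min (i + 1) N ≤ min i N + 1 := by omega
    have f1 : ((min i N : ℕ) : ℝ) ≤ ((min (i + 1) N : ℕ) : ℝ) := by exact_mod_cast e1
    have f2 : ((min (i + 1) N : ℕ) : ℝ) ≤ ((min i N : ℕ) : ℝ) + 1 := by exact_mod_cast e2
    unfold gridX
    constructor
    · nlinarith
    · nlinarith
  rcases hu with rfl | rfl <;> rcases hv with rfl | rfl
  · simpa [dist_self] using hδ
  · rw [Real.dist_eq, abs_le]; constructor <;> linarith [mono.1, mono.2]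
  · rw [Real.dist_eq, abs_le]; constructor <;> linarith [mono.1, mono.2]
  · simpa [dist_self] using hδ


lemma cell_points (a₁ b₁ a₂ b₂ : ℝ) (hab₁ : a₁ < b₁) (hab₂ : a₂ < b₂)
    (Ψ₁ Ψ₂ : ℝ × ℝ → ℝ)
    (h1a : ∀ τ ∈ Icc a₂ b₂, 0 < Ψ₁ (a₁, τ))
    (h1b : ∀ τ ∈ Icc a₂ b₂, Ψ₁ (b₁, τ) < 0)
    (h2a : ∀ ξ ∈ Icc a₁ b₁, 0 < Ψ₂ (ξ, a₂))
    (h2b : ∀ ξ ∈ Icc a₁ b₁, Ψ₂ (ξ, b₂) < 0) (n : ℕ) :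
    ∃ q₀ q₁ q₂ : ℝ × ℝ,
      q₀ ∈ Icc a₁ b₁ ×ˢ Icc a₂ b₂ ∧ q₁ ∈ Icc a₁ b₁ ×ˢ Icc a₂ b₂ ∧
      q₂ ∈ Icc a₁ b₁ ×ˢ Icc a₂ b₂ ∧
      dist q₀ q₂ ≤ ((b₁ - a₁) + (b₂ - a₂)) / ((n : ℝ) + 1) ∧
      dist q₁ q₂ ≤ ((b₁ - a₁) + (b₂ - a₂)) / ((n : ℝ) + 1) ∧
      Ψ₁ q₂ ≤ 0 ∧ 0 < Ψ₂ q₂ ∧ 0 < Ψ₁ q₁ ∧ Ψ₂ q₀ ≤ 0 := by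
  set N : ℕ := n + 1 with hNdef
  have hN : 0 < N := Nat.succ_pos n
  set X : ℕ → ℝ := gridX a₁ b₁ N with hXdef
  set Y : ℕ → ℝ := gridX a₂ b₂ N with hYdef
  have hXmem : ∀ i, X i ∈ Icc a₁ b₁ := fun i => gridX_mem hab₁.le hN i
  have hYmem : ∀ j, Y j ∈ Icc a₂ b₂ := fun j => gridX_mem hab₂.le hN j
  set L : ℕ → ℕ → Fin 3 := fun i j =>
    if 0 < Ψ₁ (X i, Y j) then 1 else if 0 < Ψ₂ (X i, Y j) then 2 else 0 with hLdef
  have hleft : ∀ j, L 0 j = 1 := by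
    intro j
    have hx0 : X 0 = a₁ := gridX_zero a₁ b₁ N
    simp only [hLdef, hx0]
    rw [if_pos (h1a _ (hYmem j))]
  have hright : ∀ j, L N j ≠ 1 := by
    intro j
    have hxN : X N = b₁ := gridX_last a₁ b₁ hN
    simp only [hLdef, hxN]
    rw [if_neg (not_lt.2 (h1b _ (hYmem j)).le)]
    split_ifs <;> decide
  have htop : ∀ i, L i N ≠ 2 := by
    intro i
    have hyN : Y N = b₂ := gridX_last a₂ b₂ hN
    simp only [hLdef, hyN]
    split_ifs with h1 h2
    · decide
    · exact absurd h2 (not_lt.2 (h2b _ (hXmem i)).le)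
    · decide
  have hbot : ∀ i, L i 0 ≠ 0 := by
    intro i
    have hy0 : Y 0 = a₂ := gridX_zero a₂ b₂ N
    simp only [hLdef, hy0]
    split_ifs with h1 h2
    · decide
    · decide
    · exact absurd (h2a _ (hXmem i)) h2
  obtain ⟨i, j, hi, hj, v₀, v₁, v₂, a0, b0, a1, b1, a2, b2', c0, c1, c2⟩ :=
    discrete_miranda N L hleft hright htop hbot
  refine ⟨(X v₀.1, Y v₀.2), (X v₁.1, Y v₁.2), (X v₂.1, Y v₂.2),
    ⟨hXmem _, hYmem _⟩, ⟨hXmem _, hYmem _⟩, ⟨hXmem _, hYmem _⟩, ?_, ?_, ?_, ?_, ?_, ?_⟩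
  · -- dist q₀ q₂
    rw [Prod.dist_eq]
    have hd1 := gridX_step hab₁.le hN a0 a2
    have hd2 := gridX_step hab₂.le hN b0 b2'
    have hδ1 : 0 ≤ (b₁ - a₁) / N := div_nonneg (by linarith) (Nat.cast_nonneg N)
    have hδ2 : 0 ≤ (b₂ - a₂) / N := div_nonneg (by linarith) (Nat.cast_nonneg N)
    have hNc : ((N : ℕ) : ℝ) = (n : ℝ) + 1 := by push_cast [hNdef]; ring
    have hsum : (b₁ - a₁) / N + (b₂ - a₂) / N = ((b₁ - a₁) + (b₂ - a₂)) / ((n : ℝ) + 1) := by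
      rw [← add_div, hNc]
    apply max_le
    · calc dist (X v₀.1) (X v₂.1) ≤ (b₁ - a₁) / N := hd1
        _ ≤ _ := by rw [← hsum]; linarith
    · calc dist (Y v₀.2) (Y v₂.2) ≤ (b₂ - a₂) / N := hd2
        _ ≤ _ := by rw [← hsum]; linarith
  · -- dist q₁ q₂
    rw [Prod.dist_eq]
    have hd1 := gridX_step hab₁.le hN a1 a2
    have hd2 := gridX_step hab₂.le hN b1 b2'
    have hδ1 : 0 ≤ (b₁ - a₁) / N := div_nonneg (by linarith) (Nat.cast_nonneg N)
    have hδ2 : 0 ≤ (b₂ - a₂) / N := div_nonneg (by linarith) (Nat.cast_nonneg N)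
    have hNc : ((N : ℕ) : ℝ) = (n : ℝ) + 1 := by push_cast [hNdef]; ring
    have hsum : (b₁ - a₁) / N + (b₂ - a₂) / N = ((b₁ - a₁) + (b₂ - a₂)) / ((n : ℝ) + 1) := by
      rw [← add_div, hNc]
    apply max_le
    · calc dist (X v₁.1) (X v₂.1) ≤ (b₁ - a₁) / N := hd1
        _ ≤ _ := by rw [← hsum]; linarith
    · calc dist (Y v₁.2) (Y v₂.2) ≤ (b₂ - a₂) / N := hd2
        _ ≤ _ := by rw [← hsum]; linarith
  · -- Ψ₁ q₂ ≤ 0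
    simp only [hLdef] at c2
    split_ifs at c2 with h1 h2
    · exact absurd c2 (by decide)
    · exact not_lt.1 h1
    · exact absurd c2 (by decide)
  · -- 0 < Ψ₂ q₂
    simp only [hLdef] at c2
    split_ifs at c2 with h1 h2
    · exact absurd c2 (by decide)
    · exact h2
    · exact absurd c2 (by decide)
  · -- 0 < Ψ₁ q₁
    simp only [hLdef] at c1
    split_ifs at c1 with h1 h2
    · exact h1
    · exact absurd c1 (by decide)
    · exact absurd c1 (by decide)
  · -- Ψ₂ q₀ ≤ 0
    simp only [hLdef] at c0
    split_ifs at c0 with h1 h2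
    · exact absurd c0 (by decide)
    · exact absurd c0 (by decide)
    · exact not_lt.1 h2


end MirandaAux

/-- **Miranda's theorem in dimension 2.** Let `Ψ = (Ψ₁, Ψ₂)` be continuous
on the rectangle `[a₁,b₁] × [a₂,b₂]`, with `Ψ₁ > 0` on the face `ξ = a₁`, `Ψ₁ < 0` on the
face `ξ = b₁`, `Ψ₂ > 0` on the face `τ = a₂` and `Ψ₂ < 0` on the face `τ = b₂`. Then `Ψ`
vanishes somewhere in the rectangle. -/
theorem miranda_dim2
    (a₁ b₁ a₂ b₂ : ℝ) (hab₁ : a₁ < b₁) (hab₂ : a₂ < b₂)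
    (Ψ₁ Ψ₂ : ℝ × ℝ → ℝ)
    (hcont : ContinuousOn (fun p : ℝ × ℝ => (Ψ₁ p, Ψ₂ p)) (Icc a₁ b₁ ×ˢ Icc a₂ b₂))
    (h1a : ∀ τ ∈ Icc a₂ b₂, 0 < Ψ₁ (a₁, τ))
    (h1b : ∀ τ ∈ Icc a₂ b₂, Ψ₁ (b₁, τ) < 0)
    (h2a : ∀ ξ ∈ Icc a₁ b₁, 0 < Ψ₂ (ξ, a₂))
    (h2b : ∀ ξ ∈ Icc a₁ b₁, Ψ₂ (ξ, b₂) < 0) :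
    ∃ p ∈ Icc a₁ b₁ ×ˢ Icc a₂ b₂, Ψ₁ p = 0 ∧ Ψ₂ p = 0 := by
  choose q₀ q₁ q₂ hm₀ hm₁ hm₂ hd₀ hd₁ hs₁ hs₂ hs₃ hs₄ using
    MirandaAux.cell_points a₁ b₁ a₂ b₂ hab₁ hab₂ Ψ₁ Ψ₂ h1a h1b h2a h2b
  set C : ℝ := (b₁ - a₁) + (b₂ - a₂) with hCdef
  have hC : 0 ≤ C := by simp only [hCdef]; linarith
  have hcomp : IsCompact (Icc a₁ b₁ ×ˢ Icc a₂ b₂) := isCompact_Icc.prod isCompact_Icc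
  obtain ⟨p, hpR, φ, hφ, hconv⟩ := hcomp.tendsto_subseq hm₂
  -- C / (k+1) tends to zero
  have hdz : Tendsto (fun k : ℕ => C / ((k : ℝ) + 1)) atTop (𝓝 0) := by
    have h2 := (tendsto_const_div_atTop_nhds_zero_nat C).comp (tendsto_add_atTop_nat 1)
    have he : (fun k : ℕ => C / ((k : ℝ) + 1)) = (fun n : ℕ => C / (n : ℝ)) ∘ (fun k => k + 1) := by
      funext k
      simp only [Function.comp_apply]
      push_cast
      ring
    rw [he]
    exact h2
  have hφk : ∀ k, C / ((φ k : ℝ) + 1) ≤ C / ((k : ℝ) + 1) := by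
    intro k
    have h0 : (k : ℝ) ≤ (φ k : ℝ) := Nat.cast_le.2 hφ.le_apply
    have h1 : (k : ℝ) + 1 ≤ (φ k : ℝ) + 1 := by linarith
    gcongr
  have htend : ∀ (q : ℕ → ℝ × ℝ), (∀ m, dist (q m) (q₂ m) ≤ C / ((m : ℝ) + 1)) →
      Tendsto (fun k => q (φ k)) atTop (𝓝 p) := by
    intro q hq
    rw [tendsto_iff_dist_tendsto_zero]
    apply squeeze_zero (f := fun k : ℕ => dist (q (φ k)) p)
      (g := fun k : ℕ => C / ((k : ℝ) + 1) + dist (q₂ (φ k)) p) (fun k => dist_nonneg)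
    · intro k
      calc dist (q (φ k)) p ≤ dist (q (φ k)) (q₂ (φ k)) + dist (q₂ (φ k)) p := dist_triangle _ _ _
        _ ≤ C / ((k : ℝ) + 1) + dist (q₂ (φ k)) p := by
            have := (hq (φ k)).trans (hφk k)
            linarith
    · have h2 : Tendsto (fun k => dist (q₂ (φ k)) p) atTop (𝓝 0) :=
        tendsto_iff_dist_tendsto_zero.1 hconv
      simpa using hdz.add h2
  have ht1 : Tendsto (fun k => q₁ (φ k)) atTop (𝓝 p) := htend q₁ hd₁
  have ht0 : Tendsto (fun k => q₀ (φ k)) atTop (𝓝 p) := htend q₀ hd₀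
  -- continuity
  have hc1 : ContinuousOn Ψ₁ (Icc a₁ b₁ ×ˢ Icc a₂ b₂) := hcont.fst
  have hc2 : ContinuousOn Ψ₂ (Icc a₁ b₁ ×ˢ Icc a₂ b₂) := hcont.snd
  have mkT : ∀ (q : ℕ → ℝ × ℝ), (∀ m, q m ∈ Icc a₁ b₁ ×ˢ Icc a₂ b₂) →
      Tendsto (fun k => q (φ k)) atTop (𝓝 p) →
      Tendsto (fun k => q (φ k)) atTop (𝓝[Icc a₁ b₁ ×ˢ Icc a₂ b₂] p) := by
    intro q hmem ht
    exact tendsto_nhdsWithin_iff.2 ⟨ht, Eventually.of_forall fun k => hmem (φ k)⟩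
  have T2 := mkT q₂ hm₂ hconv
  have T1 := mkT q₁ hm₁ ht1
  have T0 := mkT q₀ hm₀ ht0
  have k21 : Tendsto (fun k => Ψ₁ (q₂ (φ k))) atTop (𝓝 (Ψ₁ p)) := (hc1 p hpR).tendsto.comp T2
  have k22 : Tendsto (fun k => Ψ₂ (q₂ (φ k))) atTop (𝓝 (Ψ₂ p)) := (hc2 p hpR).tendsto.comp T2
  have k11 : Tendsto (fun k => Ψ₁ (q₁ (φ k))) atTop (𝓝 (Ψ₁ p)) := (hc1 p hpR).tendsto.comp T1
  have k02 : Tendsto (fun k => Ψ₂ (q₀ (φ k))) atTop (𝓝 (Ψ₂ p)) := (hc2 p hpR).tendsto.comp T0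
  have e1 : Ψ₁ p ≤ 0 := le_of_tendsto k21 (Eventually.of_forall fun k => hs₁ (φ k))
  have e2 : 0 ≤ Ψ₁ p := ge_of_tendsto k11 (Eventually.of_forall fun k => (hs₃ (φ k)).le)
  have e3 : 0 ≤ Ψ₂ p := ge_of_tendsto k22 (Eventually.of_forall fun k => (hs₂ (φ k)).le)
  have e4 : Ψ₂ p ≤ 0 := le_of_tendsto k02 (Eventually.of_forall fun k => hs₄ (φ k))
  exact ⟨p, hpR, le_antisymm e1 e2, le_antisymm e4 e3⟩
end

section
/- Let δ, C > 0 and let h₁, h₂ : ℝ³ → ℝ be measurable functions satisfying ∫_{|x| ≥ R} h_i(x)² dx ≤ C e^{−δR} for every R ≥ 0 and i = 1, 2. Then for every n ≥ 0, ∫_{ℝ³} |h₁(x) h₂(x − n e₁)| dx ≤ 2C e^{−δn/4}, where e₁ = (1,0,0). -/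
open MeasureTheory

/-- Cauchy–Schwarz for integrals of products of real functions. -/
lemma cs_aux {α : Type*} [MeasurableSpace α] {μ : Measure α} {f g : α → ℝ}
    (hf : MemLp f 2 μ) (hg : MemLp g 2 μ) :
    ∫ a, |f a * g a| ∂μ
      ≤ (∫ a, f a ^ 2 ∂μ) ^ ((1:ℝ)/2) * (∫ a, g a ^ 2 ∂μ) ^ ((1:ℝ)/2) := by
  have hpq : Real.HolderConjugate 2 2 := Real.HolderConjugate.two_two
  have h2 : (ENNReal.ofReal (2:ℝ)) = 2 := by norm_num
  have := integral_mul_norm_le_Lp_mul_Lq (μ := μ) hpq (h2 ▸ hf) (h2 ▸ hg)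
  have hsq : ∀ y : ℝ, ‖y‖ ^ (2:ℝ) = y ^ 2 := by
    intro y
    rw [show (2:ℝ) = ((2:ℕ):ℝ) by norm_num, Real.rpow_natCast, Real.norm_eq_abs, sq_abs]
  simp only [hsq] at this
  calc ∫ a, |f a * g a| ∂μ = ∫ a, ‖f a‖ * ‖g a‖ ∂μ := by
        congr 1; ext a; rw [abs_mul, Real.norm_eq_abs, Real.norm_eq_abs]
    _ ≤ _ := this

/-- Let `δ, C > 0` and let `h₁, h₂ : ℝ³ → ℝ` be square-integrable
functions whose `L²` mass outside the ball of radius `R` is at most `C e^{-δR}` for every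
`R ≥ 0`. Then for every `n ≥ 0`,
`∫ |h₁(x) h₂(x - n e₁)| dx ≤ 2 C e^{-δn/4}`, where `e₁ = (1,0,0)`. -/
theorem translated_product_decay
    (δ C : ℝ) (hδ : 0 < δ) (hC : 0 < C)
    (h₁ h₂ : EuclideanSpace ℝ (Fin 3) → ℝ)
    (hm₁ : Measurable h₁) (hm₂ : Measurable h₂)
    (hL₁ : Integrable (fun x => (h₁ x) ^ 2)) (hL₂ : Integrable (fun x => (h₂ x) ^ 2))
    (hdecay₁ : ∀ R : ℝ, 0 ≤ R →
      (∫ x in {x : EuclideanSpace ℝ (Fin 3) | R ≤ ‖x‖}, (h₁ x) ^ 2) ≤ C * Real.exp (-δ * R))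
    (hdecay₂ : ∀ R : ℝ, 0 ≤ R →
      (∫ x in {x : EuclideanSpace ℝ (Fin 3) | R ≤ ‖x‖}, (h₂ x) ^ 2) ≤ C * Real.exp (-δ * R))
    (n : ℝ) (hn : 0 ≤ n) :
    (∫ x : EuclideanSpace ℝ (Fin 3),
        |h₁ x * h₂ (x - n • EuclideanSpace.single (0 : Fin 3) (1:ℝ))|)
      ≤ 2 * C * Real.exp (-δ * n / 4) := by
  set e : EuclideanSpace ℝ (Fin 3) := n • EuclideanSpace.single (0 : Fin 3) (1:ℝ) with he
  have hne : ‖e‖ = n := by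
    rw [he, norm_smul, EuclideanSpace.norm_single]
    simp [abs_of_nonneg hn]
  set T : EuclideanSpace ℝ (Fin 3) → EuclideanSpace ℝ (Fin 3) := fun x => x - e with hTdef
  have hT : MeasurePreserving T volume volume := measurePreserving_sub_right volume e
  have hemb : MeasurableEmbedding T := (MeasurableEquiv.subRight e).measurableEmbedding
  set g : EuclideanSpace ℝ (Fin 3) → ℝ := fun x => h₂ (x - e) with hg
  have hmg : Measurable g := hm₂.comp (measurable_id.sub_const e)
  have hLg : Integrable (fun x => g x ^ 2) :=
    (hT.integrable_comp_emb hemb (g := fun y => h₂ y ^ 2)).2 hL₂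
  -- total masses
  have huniv : {x : EuclideanSpace ℝ (Fin 3) | (0:ℝ) ≤ ‖x‖} = Set.univ := by
    ext x; simp [norm_nonneg]
  have htot₂ : (∫ x, h₂ x ^ 2) ≤ C := by
    have := hdecay₂ 0 le_rfl
    rw [huniv] at this
    simpa using this
  have htot₁ : (∫ x, h₁ x ^ 2) ≤ C := by
    have := hdecay₁ 0 le_rfl
    rw [huniv] at this
    simpa using this
  have htotg : (∫ x, g x ^ 2) = ∫ x, h₂ x ^ 2 :=
    hT.integral_comp hemb (fun y => h₂ y ^ 2)
  -- integrability of the product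
  have hMp₁ : MemLp h₁ 2 volume :=
    (memLp_two_iff_integrable_sq hm₁.aestronglyMeasurable).2 hL₁
  have hMpg : MemLp g 2 volume :=
    (memLp_two_iff_integrable_sq hmg.aestronglyMeasurable).2 hLg
  have hprod : Integrable (fun x => h₁ x * g x) := by
    refine Integrable.mono' ((hL₁.add hLg).div_const 2)
      (hm₁.mul hmg).aestronglyMeasurable (ae_of_all _ fun x => ?_)
    simp only [Pi.add_apply]
    rw [Real.norm_eq_abs, abs_mul]
    nlinarith [sq_nonneg (|h₁ x| - |g x|), sq_abs (h₁ x), sq_abs (g x),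
      abs_nonneg (h₁ x), abs_nonneg (g x)]
  have habs : Integrable (fun x => |h₁ x * g x|) := hprod.abs
  -- the splitting set
  set A : Set (EuclideanSpace ℝ (Fin 3)) := {x | n / 2 ≤ ‖x‖} with hA
  have hAm : MeasurableSet A := measurableSet_le measurable_const measurable_norm
  have hhalf : (0:ℝ) ≤ n / 2 := by linarith
  -- key integral bounds
  have hE := hdecay₁ (n/2) hhalf
  have hE₂ := hdecay₂ (n/2) hhalf
  have hEpos : (0:ℝ) < C * Real.exp (-δ * (n/2)) := by positivity
  -- bound on A: h₁ tail small, g bounded by total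
  have hgA : (∫ x in A, g x ^ 2) ≤ C := by
    refine le_trans (setIntegral_le_integral hLg (ae_of_all _ fun x => sq_nonneg _)) ?_
    rw [htotg]; exact htot₂
  have h₁A : (∫ x in A, h₁ x ^ 2) ≤ C * Real.exp (-δ * (n/2)) := hE
  -- bound on Aᶜ : g tail small, h₁ bounded
  have h₁B : (∫ x in Aᶜ, h₁ x ^ 2) ≤ C :=
    le_trans (setIntegral_le_integral hL₁ (ae_of_all _ fun x => sq_nonneg _)) htot₁
  have hsub : Aᶜ ⊆ T ⁻¹' A := by
    intro x hx
    simp only [hA, Set.mem_compl_iff, Set.mem_setOf_eq, not_le] at hx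
    simp only [Set.mem_preimage, hTdef, Set.mem_setOf_eq, hA]
    have h1 : ‖e‖ - ‖x‖ ≤ ‖e - x‖ := norm_sub_norm_le e x
    rw [norm_sub_rev] at h1
    rw [hne] at h1
    linarith
  have hgB : (∫ x in Aᶜ, g x ^ 2) ≤ C * Real.exp (-δ * (n/2)) := by
    have hmono : (∫ x in Aᶜ, g x ^ 2) ≤ ∫ x in T ⁻¹' A, g x ^ 2 :=
      setIntegral_mono_set hLg.integrableOn (ae_of_all _ fun x => sq_nonneg _)
        (HasSubset.Subset.eventuallyLE hsub)
    have hchg : (∫ x in T ⁻¹' A, g x ^ 2) = ∫ y in A, h₂ y ^ 2 :=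
      hT.setIntegral_preimage_emb hemb (fun y => h₂ y ^ 2) A
    rw [hchg] at hmono
    exact le_trans hmono hE₂
  -- nonnegativity of the set integrals
  have nn : ∀ (s : Set (EuclideanSpace ℝ (Fin 3))) (f : EuclideanSpace ℝ (Fin 3) → ℝ),
      (0:ℝ) ≤ ∫ x in s, f x ^ 2 := fun s f => integral_nonneg fun x => sq_nonneg _
  -- the common bound computation
  have key : ∀ a b : ℝ, 0 ≤ a → 0 ≤ b → a ≤ C * Real.exp (-δ * (n/2)) → b ≤ C →
      a ^ ((1:ℝ)/2) * b ^ ((1:ℝ)/2) ≤ C * Real.exp (-δ * n / 4) := by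
    intro a b ha hb haC hbC
    have h1 : a ^ ((1:ℝ)/2) ≤ (C * Real.exp (-δ * (n/2))) ^ ((1:ℝ)/2) :=
      Real.rpow_le_rpow ha haC (by norm_num)
    have h2 : b ^ ((1:ℝ)/2) ≤ C ^ ((1:ℝ)/2) :=
      Real.rpow_le_rpow hb hbC (by norm_num)
    have h3 : a ^ ((1:ℝ)/2) * b ^ ((1:ℝ)/2)
        ≤ (C * Real.exp (-δ * (n/2))) ^ ((1:ℝ)/2) * C ^ ((1:ℝ)/2) := by
      apply mul_le_mul h1 h2 (Real.rpow_nonneg hb _)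
        (Real.rpow_nonneg (le_of_lt hEpos) _)
    refine le_trans h3 (le_of_eq ?_)
    have hEh : Real.exp (-δ * (n/2)) ^ ((1:ℝ)/2) = Real.exp (-δ * n / 4) := by
      rw [Real.rpow_def_of_pos (Real.exp_pos _), Real.log_exp]
      congr 1
      ring
    have hCh : C ^ ((1:ℝ)/2) * C ^ ((1:ℝ)/2) = C := by
      rw [← Real.rpow_add hC]
      norm_num
    rw [Real.mul_rpow (le_of_lt hC) (le_of_lt (Real.exp_pos _)), hEh, mul_right_comm, hCh]
  -- Cauchy–Schwarz on A and Aᶜ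
  have csA : (∫ x in A, |h₁ x * g x|) ≤ C * Real.exp (-δ * n / 4) := by
    refine le_trans (cs_aux (hMp₁.restrict _) (hMpg.restrict _)) ?_
    exact key _ _ (nn A h₁) (nn A g) h₁A hgA
  have csB : (∫ x in Aᶜ, |h₁ x * g x|) ≤ C * Real.exp (-δ * n / 4) := by
    refine le_trans (cs_aux (hMp₁.restrict _) (hMpg.restrict _)) ?_
    have := key _ _ (nn Aᶜ g) (nn Aᶜ h₁) hgB h₁B
    calc (∫ x in Aᶜ, h₁ x ^ 2) ^ ((1:ℝ)/2) * (∫ x in Aᶜ, g x ^ 2) ^ ((1:ℝ)/2)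
        = (∫ x in Aᶜ, g x ^ 2) ^ ((1:ℝ)/2) * (∫ x in Aᶜ, h₁ x ^ 2) ^ ((1:ℝ)/2) := by ring
      _ ≤ _ := this
  -- combine
  have hsplit : (∫ x, |h₁ x * g x|)
      = (∫ x in A, |h₁ x * g x|) + ∫ x in Aᶜ, |h₁ x * g x| :=
    (integral_add_compl hAm habs).symm
  calc (∫ x, |h₁ x * g x|)
      = (∫ x in A, |h₁ x * g x|) + ∫ x in Aᶜ, |h₁ x * g x| := hsplit
    _ ≤ C * Real.exp (-δ * n / 4) + C * Real.exp (-δ * n / 4) := add_le_add csA csB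
    _ = 2 * C * Real.exp (-δ * n / 4) := by ring
end

section
/- Let f : ℝ → ℝ be continuous with f(t)/t³ ≤ f(s)/s³ whenever 0 < t < s or s < t < 0, set F(s) = ∫₀^s f(t) dt, and let V : ℝ³ → ℝ be measurable with V ≥ 0. Let u : ℝ³ → ℝ be continuously differentiable with compact support and suppose the Nehari identity ∫_{ℝ³}(|∇u|² + V u²) dx + ∫_{ℝ³} φ_u u² dx = ∫_{ℝ³} f(u)u dx holds. Then J(u) := ½∫_{ℝ³}(|∇u|² + V u²) dx + ¼∫_{ℝ³} φ_u u² dx − ∫_{ℝ³} F(u) dx ≥ ¼ ∫_{ℝ³}(|∇u|² + V u²) dx. -/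
open MeasureTheory intervalIntegral

/-- The Newtonian potential of `u²`, for `u : ℝ³ → ℝ`. -/
noncomputable def phiu (u : EuclideanSpace ℝ (Fin 3) → ℝ)
    (x : EuclideanSpace ℝ (Fin 3)) : ℝ :=
  (1 / (4 * Real.pi)) * ∫ y : EuclideanSpace ℝ (Fin 3), (u y) ^ 2 / ‖x - y‖

lemma primitive_le_quarter (f : ℝ → ℝ) (hf : Continuous f)
    (hf4 : ∀ t s : ℝ, (0 < t ∧ t < s) ∨ (s < t ∧ t < 0) → f t / t ^ 3 ≤ f s / s ^ 3)
    (s : ℝ) : (∫ t in (0:ℝ)..s, f t) ≤ f s * s / 4 := by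
  rcases lt_trichotomy s 0 with hs | rfl | hs
  · -- s < 0
    set c := f s / s ^ 3 with hc
    have hle : ∀ t ∈ Set.Icc s 0, c * t ^ 3 ≤ f t := by
      intro t ht
      rcases eq_or_lt_of_le ht.2 with ht0 | ht0
      · subst ht0
        simp only [ne_eq, OfNat.ofNat_ne_zero, not_false_eq_true, zero_pow, mul_zero]
        haveI hne : (nhdsWithin (0:ℝ) (Set.Ioo s 0)).NeBot :=
          mem_closure_iff_nhdsWithin_neBot.mp (by
            rw [closure_Ioo hs.ne]; exact ⟨hs.le, le_rfl⟩)
        have hcl : Filter.Tendsto (fun t : ℝ => c * t ^ 3)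
            (nhdsWithin (0:ℝ) (Set.Ioo s 0)) (nhds (c * (0:ℝ) ^ 3)) :=
          ((continuous_const.mul (continuous_pow 3)).tendsto 0).mono_left nhdsWithin_le_nhds
        have key := le_of_tendsto_of_tendsto hcl
          (hf.continuousAt.continuousWithinAt.tendsto) ?_
        · simpa using key
        · filter_upwards [self_mem_nhdsWithin] with t ht
          have h4 := hf4 t s (Or.inr ⟨ht.1, ht.2⟩)
          have ht3 : t ^ 3 < 0 := Odd.pow_neg ⟨1, by ring⟩ ht.2
          rw [div_le_iff_of_neg ht3] at h4
          linarith
      · rcases eq_or_lt_of_le ht.1 with hts | hts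
        · have hs3 : s ^ 3 ≠ 0 := pow_ne_zero _ (ne_of_lt hs)
          rw [← hts, hc, div_mul_cancel₀ _ hs3]
        · have h4 := hf4 t s (Or.inr ⟨hts, ht0⟩)
          have ht3 : t ^ 3 < 0 := Odd.pow_neg ⟨1, by ring⟩ ht0
          rw [div_le_iff_of_neg ht3] at h4
          linarith
    have hint : (∫ t in s..(0:ℝ), c * t ^ 3) ≤ ∫ t in s..(0:ℝ), f t :=
      intervalIntegral.integral_mono_on hs.le
        ((continuous_const.mul (continuous_pow 3)).intervalIntegrable _ _)
        (hf.intervalIntegrable _ _) hle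
    have hval : (∫ t in s..(0:ℝ), c * t ^ 3) = -(f s * s / 4) := by
      rw [intervalIntegral.integral_const_mul, integral_pow]
      have hs0 : s ≠ 0 := ne_of_lt hs
      field_simp [hc]
      rw [hc]
      have h43 : s ^ 4 = s ^ 3 * s := by ring
      rw [div_mul_eq_mul_div, div_mul_eq_mul_div, div_eq_iff (pow_ne_zero 3 hs0)]
      push_cast
      ring
    rw [intervalIntegral.integral_symm]
    linarith
  · simp
  · -- 0 < s
    set c := f s / s ^ 3 with hc
    have hle : ∀ t ∈ Set.Icc (0:ℝ) s, f t ≤ c * t ^ 3 := by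
      intro t ht
      rcases eq_or_lt_of_le ht.1 with ht0 | ht0
      · rw [← ht0]
        simp only [ne_eq, OfNat.ofNat_ne_zero, not_false_eq_true, zero_pow, mul_zero]
        haveI hne : (nhdsWithin (0:ℝ) (Set.Ioo 0 s)).NeBot :=
          mem_closure_iff_nhdsWithin_neBot.mp (by
            rw [closure_Ioo hs.ne]; exact ⟨le_rfl, hs.le⟩)
        have hcl : Filter.Tendsto (fun t : ℝ => c * t ^ 3)
            (nhdsWithin (0:ℝ) (Set.Ioo 0 s)) (nhds (c * (0:ℝ) ^ 3)) :=
          ((continuous_const.mul (continuous_pow 3)).tendsto 0).mono_left nhdsWithin_le_nhds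
        have key := le_of_tendsto_of_tendsto
          (hf.continuousAt.continuousWithinAt.tendsto) hcl ?_
        · simpa using key
        · filter_upwards [self_mem_nhdsWithin] with t ht
          have h4 := hf4 t s (Or.inl ⟨ht.1, ht.2⟩)
          have ht3 : (0:ℝ) < t ^ 3 := pow_pos ht.1 3
          rw [div_le_iff₀ ht3] at h4
          linarith
      · rcases eq_or_lt_of_le ht.2 with hts | hts
        · have hs3 : s ^ 3 ≠ 0 := pow_ne_zero _ (ne_of_gt hs)
          rw [hts, hc, div_mul_cancel₀ _ hs3]
        · have h4 := hf4 t s (Or.inl ⟨ht0, hts⟩)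
          have ht3 : (0:ℝ) < t ^ 3 := pow_pos ht0 3
          rw [div_le_iff₀ ht3] at h4
          linarith
    have hint : (∫ t in (0:ℝ)..s, f t) ≤ ∫ t in (0:ℝ)..s, c * t ^ 3 :=
      intervalIntegral.integral_mono_on hs.le (hf.intervalIntegrable _ _)
        ((continuous_const.mul (continuous_pow 3)).intervalIntegrable _ _) hle
    have hval : (∫ t in (0:ℝ)..s, c * t ^ 3) = f s * s / 4 := by
      rw [intervalIntegral.integral_const_mul, integral_pow]
      have hs0 : s ≠ 0 := ne_of_gt hs
      field_simp [hc]
      rw [hc]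
      have h43 : s ^ 4 = s ^ 3 * s := by ring
      rw [div_mul_eq_mul_div, div_mul_eq_mul_div, div_eq_iff (pow_ne_zero 3 hs0)]
      push_cast
      ring
    linarith

/-- Let `f : ℝ → ℝ` be continuous with `f(s)/s³` increasing in `|s|`,
`F(s) = ∫₀ˢ f`, and `V : ℝ³ → ℝ` measurable with `V ≥ 0`. If `u : ℝ³ → ℝ` is `C¹` with
compact support and satisfies the Nehari identity
`∫ (|∇u|² + V u²) + ∫ φ_u u² = ∫ f(u) u`, then
`J(u) = ½ ∫ (|∇u|² + V u²) + ¼ ∫ φ_u u² - ∫ F(u) ≥ ¼ ∫ (|∇u|² + V u²)`. -/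
theorem energy_lower_bound_on_Nehari
    (f : ℝ → ℝ) (hf : Continuous f)
    (hf4 : ∀ t s : ℝ, (0 < t ∧ t < s) ∨ (s < t ∧ t < 0) → f t / t ^ 3 ≤ f s / s ^ 3)
    (V : EuclideanSpace ℝ (Fin 3) → ℝ) (hVmeas : Measurable V) (hV : ∀ x, 0 ≤ V x)
    (u : EuclideanSpace ℝ (Fin 3) → ℝ)
    (hu : ContDiff ℝ 1 u) (husupp : HasCompactSupport u)
    (hNehari :
      (∫ x : EuclideanSpace ℝ (Fin 3), (‖fderiv ℝ u x‖ ^ 2 + V x * (u x) ^ 2))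
        + (∫ x : EuclideanSpace ℝ (Fin 3), phiu u x * (u x) ^ 2)
        = ∫ x : EuclideanSpace ℝ (Fin 3), f (u x) * u x) :
    (1 / 2) * (∫ x : EuclideanSpace ℝ (Fin 3), (‖fderiv ℝ u x‖ ^ 2 + V x * (u x) ^ 2))
      + (1 / 4) * (∫ x : EuclideanSpace ℝ (Fin 3), phiu u x * (u x) ^ 2)
      - (∫ x : EuclideanSpace ℝ (Fin 3), ∫ t in (0:ℝ)..(u x), f t)
    ≥ (1 / 4) * ∫ x : EuclideanSpace ℝ (Fin 3), (‖fderiv ℝ u x‖ ^ 2 + V x * (u x) ^ 2) := by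
  set A := ∫ x : EuclideanSpace ℝ (Fin 3), (‖fderiv ℝ u x‖ ^ 2 + V x * (u x) ^ 2) with hA
  set B := ∫ x : EuclideanSpace ℝ (Fin 3), phiu u x * (u x) ^ 2 with hB
  -- continuity of the primitive F
  have hFc : Continuous (fun s : ℝ => ∫ t in (0:ℝ)..s, f t) := by
    rw [continuous_iff_continuousAt]
    intro s
    exact (hf.integral_hasStrictDerivAt 0 s).hasDerivAt.continuousAt
  have huc : Continuous u := hu.continuous
  -- the composed functions are continuous with compact support, hence integrable
  have hgc : Continuous (fun x => ∫ t in (0:ℝ)..(u x), f t) := hFc.comp huc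
  have hgsupp : HasCompactSupport (fun x => ∫ t in (0:ℝ)..(u x), f t) :=
    husupp.comp_left (g := fun s : ℝ => ∫ t in (0:ℝ)..s, f t)
      (by simp [intervalIntegral.integral_same])
  have hgint : Integrable (fun x => ∫ t in (0:ℝ)..(u x), f t) :=
    hgc.integrable_of_hasCompactSupport hgsupp
  have hhc : Continuous (fun x => f (u x) * u x) := (hf.comp huc).mul huc
  have hhsupp : HasCompactSupport (fun x => f (u x) * u x) :=
    husupp.comp_left (g := fun s : ℝ => f s * s) (by simp)
  have hhint : Integrable (fun x => f (u x) * u x) :=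
    hhc.integrable_of_hasCompactSupport hhsupp
  have hcomp : (∫ x : EuclideanSpace ℝ (Fin 3), ∫ t in (0:ℝ)..(u x), f t)
      ≤ ∫ x : EuclideanSpace ℝ (Fin 3), f (u x) * u x / 4 := by
    apply integral_mono hgint (hhint.div_const 4)
    intro x
    exact primitive_le_quarter f hf hf4 (u x)
  rw [MeasureTheory.integral_div] at hcomp
  linarith
end
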